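/- Let n ≥ 2 be an even integer and let m, k be integers with 2k − m ≡ n/2 (mod n) and gcd(n, m, k) = 1. Then the cyclically presented group G_n(x_0 x_m x_k^{-1}) is isomorphic (as a group) to G_n(x_0 x_{n/2+2} x_1^{-1}). -/

import Mathlib

/-- Relators `x_i x_{i+a} x_{i+b}` of the cyclic presentation `P_n(x_0 x_a x_b)`. -/
def posRels (n : ℕ) (a b : ZMod n) : Set (FreeGroup (ZMod n)) :=
  Set.range fun i : ZMod n => FreeGroup.of i * FreeGroup.of (i + a) * FreeGroup.of (i + b)

/-- The cyclically presented group `G_n(x_0 x_a x_b)`. -/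
abbrev Gpos (n : ℕ) (a b : ZMod n) : Type := PresentedGroup (posRels n a b)

/-- Relators `x_i x_{i+a} x_{i+b}⁻¹` of the cyclic presentation `P_n(x_0 x_a x_b⁻¹)`. -/
def negRels (n : ℕ) (a b : ZMod n) : Set (FreeGroup (ZMod n)) :=
  Set.range fun i : ZMod n => FreeGroup.of i * FreeGroup.of (i + a) * (FreeGroup.of (i + b))⁻¹

/-- The cyclically presented group `G_n(x_0 x_a x_b⁻¹)`. -/
abbrev Gneg (n : ℕ) (a b : ZMod n) : Type := PresentedGroup (negRels n a b)

/-- A free-group automorphism matching normal closures gives a presented-group iso. -/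
noncomputable def presEquiv {α : Type*} (e : FreeGroup α ≃* FreeGroup α)
    (R S : Set (FreeGroup α))
    (h1 : ∀ r ∈ R, e r ∈ Subgroup.normalClosure S)
    (h2 : ∀ s ∈ S, e.symm s ∈ Subgroup.normalClosure R) :
    PresentedGroup R ≃* PresentedGroup S := by
  refine QuotientGroup.congr (Subgroup.normalClosure R) (Subgroup.normalClosure S) e ?_
  have hmap : Subgroup.map (e : FreeGroup α →* FreeGroup α) (Subgroup.normalClosure R)
      = Subgroup.normalClosure ((e : FreeGroup α →* FreeGroup α) '' R) :=
    Subgroup.map_normalClosure R _ e.surjective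
  rw [hmap]
  apply le_antisymm
  · apply Subgroup.normalClosure_le_normal
    rintro x ⟨r, hr, rfl⟩
    exact h1 r hr
  · apply Subgroup.normalClosure_le_normal
    intro s hs
    have : s = e (e.symm s) := (e.apply_symm_apply s).symm
    rw [this, ← hmap]
    exact ⟨e.symm s, h2 s hs, rfl⟩

def mulEquivZMod (n : ℕ) (c d : ZMod n) (hcd : c * d = 1) (hdc : d * c = 1) :
    ZMod n ≃ ZMod n where
  toFun i := c * i
  invFun i := d * i
  left_inv i := by simp [← mul_assoc, hdc]
  right_inv i := by simp [← mul_assoc, hcd]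

/-- Multiplying indices by a unit. -/
noncomputable def unitEquiv (n : ℕ) (a b c d : ZMod n) (hcd : c * d = 1) (hdc : d * c = 1) :
    Gneg n a b ≃* Gneg n (c * a) (c * b) := by
  refine presEquiv (FreeGroup.freeGroupCongr (mulEquivZMod n c d hcd hdc)) _ _ ?_ ?_
  · rintro r ⟨i, rfl⟩
    apply Subgroup.subset_normalClosure
    refine ⟨c * i, ?_⟩
    simp [mulEquivZMod, mul_add]
  · rintro s ⟨i, rfl⟩
    apply Subgroup.subset_normalClosure
    refine ⟨d * i, ?_⟩
    have h2 : ∀ y : ZMod n, d * (i + c * y) = d * i + y := by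
      intro y; rw [mul_add, ← mul_assoc, hdc, one_mul]
    simp [mulEquivZMod, h2]

/-- The free group automorphism inverting every generator. -/
noncomputable def invAut (α : Type*) : FreeGroup α ≃* FreeGroup α :=
  MonoidHom.toMulEquiv (FreeGroup.lift fun i => (FreeGroup.of i)⁻¹)
    (FreeGroup.lift fun i => (FreeGroup.of i)⁻¹)
    (by ext i; simp) (by ext i; simp)

@[simp] lemma invAut_of {α : Type*} (i : α) : invAut α (FreeGroup.of i) = (FreeGroup.of i)⁻¹ := by
  simp [invAut]

@[simp] lemma invAut_symm_of {α : Type*} (i : α) :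
    (invAut α).symm (FreeGroup.of i) = (FreeGroup.of i)⁻¹ := by
  simp [invAut, MonoidHom.toMulEquiv]

lemma conj_inv_mem {G : Type*} [Group G] (S : Set G) {x : G} (g : G)
    (hx : x ∈ Subgroup.normalClosure S) :
    g⁻¹ * x⁻¹ * g ∈ Subgroup.normalClosure S := by
  have := Subgroup.normalClosure_normal (s := S)
  simpa using this.conj_mem _ (inv_mem hx) g⁻¹

/-- Inverting all generators: `Gneg n a b ≃* Gneg n (-a) (b-a)`. -/
noncomputable def invEquiv (n : ℕ) (a b : ZMod n) :
    Gneg n a b ≃* Gneg n (-a) (b - a) := by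
  refine presEquiv (invAut (ZMod n)) _ _ ?_ ?_
  · rintro r ⟨i, rfl⟩
    have hmem : FreeGroup.of (i + a) * FreeGroup.of (i + a + -a) *
        (FreeGroup.of (i + a + (b - a)))⁻¹ ∈ Subgroup.normalClosure (negRels n (-a) (b - a)) :=
      Subgroup.subset_normalClosure ⟨i + a, rfl⟩
    have := conj_inv_mem (negRels n (-a) (b - a)) (FreeGroup.of (i + b)) hmem
    have harr : i + a + -a = i := by ring
    have harr2 : i + a + (b - a) = i + b := by ring
    rw [harr, harr2] at this
    convert this using 1
    simp [mul_assoc]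

  · rintro s ⟨i, rfl⟩
    have hmem : FreeGroup.of (i + -a) * FreeGroup.of (i + -a + a) *
        (FreeGroup.of (i + -a + b))⁻¹ ∈ Subgroup.normalClosure (negRels n a b) :=
      Subgroup.subset_normalClosure ⟨i + -a, rfl⟩
    have := conj_inv_mem (negRels n a b) (FreeGroup.of (i + (b - a))) hmem
    have harr : i + -a + a = i := by ring
    have harr2 : i + -a + b = i + (b - a) := by ring
    rw [harr, harr2] at this
    convert this using 1
    simp [mul_assoc]


lemma oddCase (n : ℕ) (hn : 2 ≤ n) (heven : 2 ∣ n) (m k : ℤ) (hk : Odd k)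
    (hcong : (n : ℤ) ∣ (2 * k - m - ((n / 2 : ℕ) : ℤ)))
    (hcop : ∀ p : ℕ, p.Prime → (p : ℤ) ∣ m → (p : ℤ) ∣ k → (p : ℤ) ∣ n → False) :
    Nonempty (Gneg n (m : ZMod n) (k : ZMod n) ≃*
      Gneg n ((n / 2 + 2 : ℕ) : ZMod n) 1) := by
  obtain ⟨n2, hn2⟩ := heven
  have hn2' : ((n : ℤ)) = 2 * (n2 : ℤ) := by exact_mod_cast hn2
  have hhalf : (n / 2 : ℕ) = n2 := by omega
  rw [hhalf] at hcong
  -- k is coprime to n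
  have hgcdkn : Int.gcd k n = 1 := by
    by_contra h
    have hne : Int.gcd k n ≠ 0 := by
      intro h0
      rw [Int.gcd_eq_zero_iff] at h0
      have : (n : ℤ) = 0 := h0.2
      omega
    obtain ⟨p, hp, hpd⟩ := Nat.exists_prime_and_dvd h
    have hpk : (p : ℤ) ∣ k := dvd_trans (Int.natCast_dvd_natCast.mpr hpd) (Int.gcd_dvd_left _ _)
    have hpn : (p : ℤ) ∣ (n : ℤ) := dvd_trans (Int.natCast_dvd_natCast.mpr hpd) (Int.gcd_dvd_right _ _)
    have hp2 : p ≠ 2 := by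
      intro h2
      subst h2
      rw [Int.odd_iff] at hk
      omega
    have hpn2 : (p : ℤ) ∣ (n2 : ℤ) := by
      have hpnn : p ∣ n := Int.ofNat_dvd.mp (by exact_mod_cast hpn)
      rw [hn2] at hpnn
      rcases (Nat.Prime.dvd_mul hp).mp hpnn with h | h
      · exact absurd ((Nat.prime_dvd_prime_iff_eq hp Nat.prime_two).mp h) hp2
      · exact_mod_cast Int.natCast_dvd_natCast.mpr h
    have hpm : (p : ℤ) ∣ m := by
      obtain ⟨t, ht⟩ := hcong
      have : m = 2 * k - (n2 : ℤ) - (n : ℤ) * t := by linarith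
      rw [this]
      exact dvd_sub (dvd_sub (Dvd.dvd.mul_left hpk 2) hpn2) (Dvd.dvd.mul_right hpn t)
    exact hcop p hp hpm hpk hpn
  have hco : IsCoprime k (n : ℤ) := Int.isCoprime_iff_gcd_eq_one.mpr hgcdkn
  obtain ⟨q, v, huv⟩ := hco
  -- q is odd
  have hq : Odd q := by
    have h1 : Odd (q * k) := by
      have heq : q * k = 1 - 2 * (v * (n2 : ℤ)) := by rw [hn2'] at huv; linarith
      rw [heq]
      exact Odd.sub_even odd_one (even_two_mul _)
    exact (Int.Odd.of_mul_left h1)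
  obtain ⟨w, hw⟩ := hq
  obtain ⟨t, ht⟩ := hcong
  -- the divisibility for q * m
  have hdvd : (n : ℤ) ∣ q * m - (((n / 2 + 2 : ℕ) : ℤ)) := by
    have hcast : ((n / 2 + 2 : ℕ) : ℤ) = (n2 : ℤ) + 2 := by push_cast; omega
    rw [hcast]
    refine ⟨-2 * v - w - 1 - q * t, ?_⟩
    have hm : m = 2 * k - (n2 : ℤ) - (n : ℤ) * t := by linarith
    have hqk : q * k = 1 - v * (n : ℤ) := by linarith
    linear_combination q * hm + 2 * hqk - (n2 : ℤ) * hw + (w + 1) * hn2'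
  -- pass to ZMod
  set c : ZMod n := ((q : ℤ) : ZMod n)
  set d : ZMod n := ((k : ℤ) : ZMod n)
  have hcd : c * d = 1 := by
    have : ((q * k : ℤ) : ZMod n) = ((1 - v * n : ℤ) : ZMod n) := by
      congr 1; linarith
    simpa [c, d, ZMod.natCast_self] using this
  have hdc : d * c = 1 := by rw [mul_comm]; exact hcd
  have hcm : c * (m : ZMod n) = ((n / 2 + 2 : ℕ) : ZMod n) := by
    have h0 : ((q * m : ℤ) : ZMod n) = (((n / 2 + 2 : ℕ) : ℤ) : ZMod n) := by
      rw [← sub_eq_zero, ← Int.cast_sub]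
      exact (ZMod.intCast_zmod_eq_zero_iff_dvd _ n).mpr hdvd
    rw [Int.cast_mul, Int.cast_natCast] at h0
    simpa [c] using h0
  have hck : c * (k : ZMod n) = 1 := hcd
  have e := unitEquiv n (m : ZMod n) (k : ZMod n) c d hcd hdc
  rw [hcm, hck] at e
  exact ⟨e⟩

theorem stmt13 (n : ℕ) (hn : 2 ≤ n) (heven : 2 ∣ n) (m k : ℤ)
    (hcong : (n : ℤ) ∣ (2 * k - m - ((n / 2 : ℕ) : ℤ)))
    (hgcd : Int.gcd (n : ℤ) ((Int.gcd m k : ℤ)) = 1) :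
    Nonempty (Gneg n (m : ZMod n) (k : ZMod n) ≃*
      Gneg n ((n / 2 + 2 : ℕ) : ZMod n) 1) := by
  have hcop : ∀ p : ℕ, p.Prime → (p : ℤ) ∣ m → (p : ℤ) ∣ k → (p : ℤ) ∣ n → False := by
    intro p hp h1 h2 h3
    have hg : (p : ℤ) ∣ (Int.gcd m k : ℤ) := Int.dvd_coe_gcd h1 h2
    have : (p : ℤ) ∣ (Int.gcd (n : ℤ) ((Int.gcd m k : ℤ)) : ℤ) := Int.dvd_coe_gcd h3 hg
    rw [hgcd] at this
    have : p ∣ 1 := Int.ofNat_dvd.mp (by exact_mod_cast this)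
    exact Nat.Prime.one_lt hp |>.ne' (Nat.dvd_one.mp this)
  rcases Int.even_or_odd k with hke | hko
  · -- k even : first invert generators to get parameters (-m, k-m) with k-m odd
    have hmo : Odd m := by
      rw [Int.odd_iff]
      rcases Int.even_iff.mp hke with h2k
      by_contra h
      have hm2 : (2 : ℤ) ∣ m := Int.dvd_of_emod_eq_zero (by omega)
      have hk2 : (2 : ℤ) ∣ k := Int.dvd_of_emod_eq_zero (by omega)
      exact hcop 2 Nat.prime_two hm2 hk2 (by exact_mod_cast heven)
    have hko' : Odd (k - m) := Odd.sub_even hmo hke |>.neg |> fun h => by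
      simpa [neg_sub] using h
    have hcong' : (n : ℤ) ∣ (2 * (k - m) - (-m) - ((n / 2 : ℕ) : ℤ)) := by
      have : 2 * (k - m) - (-m) - ((n / 2 : ℕ) : ℤ) = 2 * k - m - ((n / 2 : ℕ) : ℤ) := by ring
      rw [this]; exact hcong
    have hcop' : ∀ p : ℕ, p.Prime → (p : ℤ) ∣ (-m) → (p : ℤ) ∣ (k - m) → (p : ℤ) ∣ n → False := by
      intro p hp h1 h2 h3
      have hm : (p : ℤ) ∣ m := (dvd_neg.mp h1)
      exact hcop p hp hm (by have := dvd_add h2 hm; simpa using this) h3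
    obtain ⟨e2⟩ := oddCase n hn heven (-m) (k - m) hko' hcong' hcop'
    have e1 := invEquiv n (m : ZMod n) (k : ZMod n)
    have hc1 : ((-m : ℤ) : ZMod n) = -(m : ZMod n) := by push_cast; ring
    have hc2 : ((k - m : ℤ) : ZMod n) = (k : ZMod n) - (m : ZMod n) := by push_cast; ring
    rw [hc1, hc2] at e2
    exact ⟨e1.trans e2⟩
  · exact oddCase n hn heven m k hko hcong hcop
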